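/- arXiv:2401.14202 — 3 statements merged into one kernel-verified Lean document; each statement's English description precedes it below -/
import Mathlib

section
/- Let X be a real Hilbert space and H(u,α,ξ) a stripe with u ≠ 0, ξ ≥ 0. For any x ∈ X, the distance from x to the stripe is dist(x, H(u,α,ξ)) = max(0, (|⟨u,x⟩ - α| - ξ))/‖u‖. -/
open scoped RealInnerProductSpace

/-- Distance from a point to the stripe H(u,α,ξ):
    dist(x, H(u,α,ξ)) = max(0, |⟪u,x⟫ - α| - ξ) / ‖u‖. -/
theorem stmt_3 {X : Type*} [NormedAddCommGroup X] [InnerProductSpace ℝ X] [CompleteSpace X]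
    (u : X) (hu : u ≠ 0) (α ξ : ℝ) (hξ : 0 ≤ ξ) (x : X) :
    Metric.infDist x {z : X | |⟪u, z⟫ - α| ≤ ξ} = max 0 (|⟪u, x⟫ - α| - ξ) / ‖u‖ := by
  have hun : (0:ℝ) < ‖u‖ := norm_pos_iff.mpr hu
  have hu2 : ‖u‖ ^ 2 ≠ 0 := by positivity
  set S : Set X := {z : X | |⟪u, z⟫ - α| ≤ ξ} with hS
  have hne : S.Nonempty := by
    refine ⟨(α / ‖u‖ ^ 2) • u, ?_⟩
    simp only [hS, Set.mem_setOf_eq, real_inner_smul_right, real_inner_self_eq_norm_sq]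
    rw [div_mul_cancel₀ _ hu2]
    simpa using hξ
  by_cases h : |⟪u, x⟫ - α| ≤ ξ
  · have hx : x ∈ S := h
    rw [Metric.infDist_zero_of_mem hx, max_eq_left (by linarith), zero_div]
  · push_neg at h
    set d : ℝ := ⟪u, x⟫ - α with hd
    rw [max_eq_right (by linarith)]
    apply le_antisymm
    · set s : ℝ := if 0 ≤ d then 1 else -1 with hs
      have hsd : s * |d| = d := by
        rcases le_or_gt 0 d with hle | hlt
        · simp [hs, if_pos hle, abs_of_nonneg hle]
        · simp [hs, if_neg (not_le.mpr hlt), abs_of_neg hlt]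
      have hsabs : |s| = 1 := by
        rcases le_or_gt 0 d with hle | hlt
        · simp [hs, if_pos hle]
        · simp [hs, if_neg (not_le.mpr hlt)]
      set c : ℝ := s * (|d| - ξ) / ‖u‖ ^ 2 with hc
      have hz : x - c • u ∈ S := by
        simp only [hS, Set.mem_setOf_eq, inner_sub_right, real_inner_smul_right,
          real_inner_self_eq_norm_sq]
        rw [hc, div_mul_cancel₀ _ hu2]
        have : ⟪u, x⟫ - s * (|d| - ξ) - α = s * ξ := by
          have : d - s * (|d| - ξ) = s * ξ := by
            rw [mul_sub, hsd]; ring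
          linarith [this]
        rw [this, abs_mul, hsabs, one_mul, abs_of_nonneg hξ]
      calc Metric.infDist x S ≤ dist x (x - c • u) := Metric.infDist_le_dist_of_mem hz
        _ = (|d| - ξ) / ‖u‖ := by
            rw [dist_eq_norm]
            simp only [sub_sub_cancel, norm_smul, Real.norm_eq_abs]
            rw [hc, abs_div, abs_mul, hsabs, one_mul, abs_of_nonneg (by linarith : (0:ℝ) ≤ |d| - ξ)]
            rw [abs_of_nonneg (by positivity : (0:ℝ) ≤ ‖u‖ ^ 2)]
            rw [sq, div_mul_eq_div_div, div_mul_cancel₀ _ (ne_of_gt hun)]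
    · by_contra hlt
      push_neg at hlt
      obtain ⟨y, hy, hdy⟩ := (Metric.infDist_lt_iff hne).mp hlt
      have hy' : |⟪u, y⟫ - α| ≤ ξ := hy
      have key : |d| - ξ ≤ ‖u‖ * dist x y := by
        have h1 : |⟪u, x - y⟫| ≤ ‖u‖ * ‖x - y‖ := abs_real_inner_le_norm u (x - y)
        have h2 : |d| - ξ ≤ |⟪u, x - y⟫| := by
          rw [inner_sub_right]
          have := abs_sub_abs_le_abs_sub (⟪u, x⟫ - α) (⟪u, y⟫ - α)
          have h3 : |(⟪u, x⟫ - α) - (⟪u, y⟫ - α)| = |⟪u, x⟫ - ⟪u, y⟫| := by ring_nf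
          rw [h3] at this
          linarith
        rw [dist_eq_norm]
        linarith
      rw [lt_div_iff₀ hun, mul_comm] at hdy
      linarith
end

section
/- Let X, Y be real Hilbert spaces, A^η : X → Y bounded linear, v^δ ∈ Y, and suppose c† ∈ X satisfies ‖A^η c† - v^δ‖ ≤ η·ρ + δ with ‖c†‖ ≤ ρ. For a current iterate c with residual w := A^η c - v^δ, set u := (A^η)* w, α := ⟨u, c⟩ - ‖w‖², and ξ := (η ρ + δ)·‖w‖. Then c† lies in the stripe H(u, α, ξ) = {z : |⟨u,z⟩ - α| ≤ ξ}. -/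
open scoped RealInnerProductSpace

/-- The RESESOP stripe defined via the residual contains the sought solution c†. -/
theorem stmt_5 {X Y : Type*} [NormedAddCommGroup X] [InnerProductSpace ℝ X] [CompleteSpace X]
    [NormedAddCommGroup Y] [InnerProductSpace ℝ Y] [CompleteSpace Y]
    (Aη : X →L[ℝ] Y) (vδ : Y) (η δ ρ : ℝ)
    (cd : X) (hres : ‖Aη cd - vδ‖ ≤ η * ρ + δ) (hcd : ‖cd‖ ≤ ρ)
    (c : X) (w : Y) (hw : w = Aη c - vδ)
    (u : X) (hu : u = (ContinuousLinearMap.adjoint Aη) w)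
    (α ξ : ℝ) (hα : α = ⟪u, c⟫ - ‖w‖ ^ 2) (hξ : ξ = (η * ρ + δ) * ‖w‖) :
    cd ∈ {z : X | |⟪u, z⟫ - α| ≤ ξ} := by
  have key : ⟪u, cd⟫ - α = ⟪w, Aη cd - vδ⟫ := by
    have h1 : ⟪u, cd⟫ = ⟪w, Aη cd⟫ := by
      rw [hu, ContinuousLinearMap.adjoint_inner_left]
    have h2 : ⟪u, c⟫ = ⟪w, Aη c⟫ := by
      rw [hu, ContinuousLinearMap.adjoint_inner_left]
    have h3 : ‖w‖ ^ 2 = ⟪w, w⟫ := (real_inner_self_eq_norm_sq w).symm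
    rw [hα, h1, h2, h3, hw]
    rw [inner_sub_right, inner_sub_right]
    ring
  simp only [Set.mem_setOf_eq, key, hξ]
  calc |⟪w, Aη cd - vδ⟫| ≤ ‖w‖ * ‖Aη cd - vδ‖ := abs_real_inner_le_norm _ _
    _ ≤ ‖w‖ * (η * ρ + δ) := by
        exact mul_le_mul_of_nonneg_left hres (norm_nonneg _)
    _ = (η * ρ + δ) * ‖w‖ := mul_comm _ _
end

section
/- Let X be a real Hilbert space and suppose stripes H_n := H(u_n, α_n, ξ_n) (with u_n ≠ 0) all contain a common point c†. Define x_{n+1} = P_{H_n}(x_n). If x_n ∉ H_n, then ‖x_{n+1} - c†‖² ≤ ‖x_n - c†‖² - ((|⟨u_n, x_n⟩ - α_n| - ξ_n)/‖u_n‖)². -/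
open scoped RealInnerProductSpace

/-- Quantified per-iteration error decrease for projection onto a stripe containing
    c†: if xₙ ∉ Hₙ then
    ‖x_{n+1} - c†‖² ≤ ‖xₙ - c†‖² - ((|⟪uₙ,xₙ⟫ - αₙ| - ξₙ)/‖uₙ‖)². -/
theorem stmt_18 {X : Type*} [NormedAddCommGroup X] [InnerProductSpace ℝ X] [CompleteSpace X]
    (u : ℕ → X) (hu : ∀ n, u n ≠ 0) (α ξ : ℕ → ℝ) (hξ : ∀ n, 0 ≤ ξ n)
    (cd : X) (hcd : ∀ n, cd ∈ {z : X | |⟪u n, z⟫ - α n| ≤ ξ n})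
    (x : ℕ → X)
    (hx : ∀ n, x (n + 1) ∈ {z : X | |⟪u n, z⟫ - α n| ≤ ξ n} ∧
      ∀ z ∈ {z : X | |⟪u n, z⟫ - α n| ≤ ξ n}, ‖x n - x (n + 1)‖ ≤ ‖x n - z‖)
    (n : ℕ) (hn : x n ∉ {z : X | |⟪u n, z⟫ - α n| ≤ ξ n}) :
    ‖x (n + 1) - cd‖ ^ 2 ≤ ‖x n - cd‖ ^ 2 - ((|⟪u n, x n⟫ - α n| - ξ n) / ‖u n‖) ^ 2 := by
  set S := {z : X | |⟪u n, z⟫ - α n| ≤ ξ n} with hS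
  obtain ⟨hmem, hmin⟩ := hx n
  have hconv : Convex ℝ S := by
    intro a ha b hb s t hs ht hst
    simp only [hS, Set.mem_setOf_eq] at ha hb ⊢
    have key : ⟪u n, s • a + t • b⟫ - α n
        = s * (⟪u n, a⟫ - α n) + t * (⟪u n, b⟫ - α n) := by
      rw [inner_add_right, real_inner_smul_right, real_inner_smul_right]
      linear_combination α n * hst
    rw [key]
    calc |s * (⟪u n, a⟫ - α n) + t * (⟪u n, b⟫ - α n)|
        ≤ |s * (⟪u n, a⟫ - α n)| + |t * (⟪u n, b⟫ - α n)| := abs_add_le _ _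
      _ = s * |⟪u n, a⟫ - α n| + t * |⟪u n, b⟫ - α n| := by
          rw [abs_mul, abs_mul, abs_of_nonneg hs, abs_of_nonneg ht]
      _ ≤ s * ξ n + t * ξ n := by
          gcongr
      _ = ξ n := by rw [← add_mul, hst, one_mul]
  haveI : Nonempty S := ⟨⟨cd, hcd n⟩⟩
  have hinf : ‖x n - x (n + 1)‖ = ⨅ w : S, ‖x n - w‖ := by
    apply le_antisymm
    · exact le_ciInf fun w => hmin w w.2
    · exact ciInf_le ⟨0, by rintro y ⟨w, rfl⟩; exact norm_nonneg _⟩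
        (⟨x (n + 1), hmem⟩ : S)
  have hobtuse : ⟪x n - x (n + 1), cd - x (n + 1)⟫ ≤ 0 :=
    (norm_eq_iInf_iff_real_inner_le_zero hconv hmem).mp hinf cd (hcd n)
  -- distance lower bound
  have hun : (0 : ℝ) < ‖u n‖ := norm_pos_iff.mpr (hu n)
  have hA : ξ n < |⟪u n, x n⟫ - α n| := by
    simpa [hS, Set.mem_setOf_eq, not_le] using hn
  have hcs : |⟪u n, x n - x (n + 1)⟫| ≤ ‖u n‖ * ‖x n - x (n + 1)‖ := by
    simpa using abs_real_inner_le_norm (u n) (x n - x (n + 1))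
  have hlow : |⟪u n, x n⟫ - α n| - ξ n ≤ |⟪u n, x n - x (n + 1)⟫| := by
    have h1 : |⟪u n, x (n + 1)⟫ - α n| ≤ ξ n := hmem
    have : |⟪u n, x n⟫ - α n| ≤ |⟪u n, x n - x (n + 1)⟫| + |⟪u n, x (n + 1)⟫ - α n| := by
      rw [inner_sub_right]
      calc |⟪u n, x n⟫ - α n|
          = |(⟪u n, x n⟫ - ⟪u n, x (n + 1)⟫) + (⟪u n, x (n + 1)⟫ - α n)| := by ring_nf
        _ ≤ _ := abs_add_le _ _
    linarith
  set d : ℝ := (|⟪u n, x n⟫ - α n| - ξ n) / ‖u n‖ with hd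
  have hd0 : 0 ≤ d := div_nonneg (by linarith) hun.le
  have hdle : d ≤ ‖x n - x (n + 1)‖ := by
    rw [hd, div_le_iff₀ hun]
    calc |⟪u n, x n⟫ - α n| - ξ n ≤ |⟪u n, x n - x (n + 1)⟫| := hlow
      _ ≤ ‖u n‖ * ‖x n - x (n + 1)‖ := hcs
      _ = ‖x n - x (n + 1)‖ * ‖u n‖ := by ring
  have hdsq : d ^ 2 ≤ ‖x n - x (n + 1)‖ ^ 2 := by
    have := sq_le_sq' (by linarith [norm_nonneg (x n - x (n + 1))]) hdle
    simpa using this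
  -- expansion
  have hexp : ‖x n - cd‖ ^ 2
      = ‖x n - x (n + 1)‖ ^ 2 + 2 * ⟪x n - x (n + 1), x (n + 1) - cd⟫
        + ‖x (n + 1) - cd‖ ^ 2 := by
    have := norm_add_sq_real (x n - x (n + 1)) (x (n + 1) - cd)
    simpa [sub_add_sub_cancel] using this
  have hip : 0 ≤ ⟪x n - x (n + 1), x (n + 1) - cd⟫ := by
    have : ⟪x n - x (n + 1), x (n + 1) - cd⟫ = -⟪x n - x (n + 1), cd - x (n + 1)⟫ := by
      rw [← inner_neg_right]; congr 1; abel
    rw [this]; linarith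
  linarith
end
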